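/- arXiv:math/0412020 — 4 statements merged into one kernel-verified Lean document; each statement's English description precedes it below -/
import Mathlib

section
/- For every $n\ge 1$, the closed $n$-cube $[0,1]^n$ can be covered by finitely many closed sets, each of diameter at most $1+\epsilon$ (for any given $\epsilon>0$), such that every point lies in at most $n$ of the sets. -/
set_option maxHeartbeats 1000000

open Metric Set

namespace LebSharp

open Finset

def cond (δ e t : ℝ) : ℕ ⊕ ℕ → Prop
  | Sum.inl v => (v : ℝ) * δ - e ≤ t ∧ t ≤ (v : ℝ) * δ + e
  | Sum.inr a => (a : ℝ) * δ + 2 * e ≤ t ∧ t ≤ ((a : ℝ) + 1) * δ - 2 * e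

@[simp] lemma cond_inl (δ e t : ℝ) (v : ℕ) :
    cond δ e t (Sum.inl v) ↔ (v : ℝ) * δ - e ≤ t ∧ t ≤ (v : ℝ) * δ + e := Iff.rfl

@[simp] lemma cond_inr (δ e t : ℝ) (a : ℕ) :
    cond δ e t (Sum.inr a) ↔ (a : ℝ) * δ + 2 * e ≤ t ∧ t ≤ ((a : ℝ) + 1) * δ - 2 * e := Iff.rfl

def lev {d N : ℕ} (c : Fin d → Fin (N + 1) ⊕ Fin N) : ℕ :=
  (Finset.univ.filter (fun i => (c i).isRight = true)).card

noncomputable def Ej (δ : ℝ) (j : ℕ) : ℝ := δ / 3 ^ (j + 1)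

lemma Ej_pos {δ : ℝ} (hδ : 0 < δ) (j : ℕ) : 0 < Ej δ j := by
  rw [Ej]; positivity

lemma Ej_le_third {δ : ℝ} (hδ : 0 < δ) (j : ℕ) : Ej δ j ≤ δ / 3 := by
  rw [Ej]
  gcongr <;>
    first
      | exact hδ.le
      | omega
      | exact le_self_pow₀ (by norm_num) (by omega)
      | norm_num

lemma Ej_anti {δ : ℝ} (hδ : 0 < δ) {j j' : ℕ} (h : j ≤ j') : Ej δ j' ≤ Ej δ j := by
  rw [Ej, Ej]
  gcongr <;> first | exact hδ.le | omega | norm_num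

lemma Ej_pred {δ : ℝ} {j : ℕ} (hj : 1 ≤ j) : Ej δ (j - 1) = 3 * Ej δ j := by
  have h : j - 1 + 1 = j := by omega
  rw [Ej, Ej, h, pow_succ]
  have : (3:ℝ) ^ j ≠ 0 := by positivity
  field_simp

lemma Ej_le_ninth {δ : ℝ} (hδ : 0 < δ) {j : ℕ} (hj : 1 ≤ j) : Ej δ j ≤ δ / 9 := by
  rw [Ej]
  gcongr <;>
    first
      | exact hδ.le
      | omega
      | (calc (9:ℝ) = 3 ^ 2 := by norm_num
          _ ≤ 3 ^ (j + 1) := by apply pow_le_pow_right₀ (by norm_num) (by omega))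
      | norm_num

def Abrick (d N : ℕ) (δ : ℝ) (c : Fin d → Fin (N + 1) ⊕ Fin N) :
    Set (EuclideanSpace ℝ (Fin (d + 1))) :=
  {x | (∀ i, x i ∈ Set.Icc (0:ℝ) 1) ∧
      ∀ i : Fin d, cond δ (Ej δ (lev c)) (x i.succ) (Sum.map Fin.val Fin.val (c i))}

lemma isClosed_cond (δ e : ℝ) (s : ℕ ⊕ ℕ) : IsClosed {t : ℝ | cond δ e t s} := by
  rcases s with v | a
  · exact isClosed_Icc (a := (v : ℝ) * δ - e) (b := (v : ℝ) * δ + e)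
  · exact isClosed_Icc (a := (a : ℝ) * δ + 2 * e) (b := ((a : ℝ) + 1) * δ - 2 * e)

lemma isClosed_Abrick (d N : ℕ) (δ : ℝ) (c : Fin d → Fin (N + 1) ⊕ Fin N) :
    IsClosed (Abrick d N δ c) := by
  have h : Abrick d N δ c =
      (⋂ i : Fin (d + 1), (EuclideanSpace.proj (𝕜 := ℝ) i) ⁻¹' (Set.Icc 0 1)) ∩
      (⋂ i : Fin d, (EuclideanSpace.proj (𝕜 := ℝ) i.succ) ⁻¹'
        {t : ℝ | cond δ (Ej δ (lev c)) t (Sum.map Fin.val Fin.val (c i))}) := by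
    ext x
    simp [Abrick, Set.mem_iInter]
  rw [h]
  exact ((isClosed_iInter fun i =>
      isClosed_Icc.preimage (EuclideanSpace.proj i).continuous)).inter
    (isClosed_iInter fun i =>
      (isClosed_cond δ _ _).preimage (EuclideanSpace.proj i.succ).continuous)

lemma dist_le_of_mem {d N : ℕ} {δ : ℝ} (hδ : 0 < δ) {c : Fin d → Fin (N + 1) ⊕ Fin N}
    {x y : EuclideanSpace ℝ (Fin (d + 1))}
    (hx : x ∈ Abrick d N δ c) (hy : y ∈ Abrick d N δ c) :
    dist x y ≤ Real.sqrt (1 + d * δ ^ 2) := by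
  rw [EuclideanSpace.dist_eq]
  apply Real.sqrt_le_sqrt
  rw [Fin.sum_univ_succ]
  have hE : 0 < Ej δ (lev c) := Ej_pos hδ _
  have hE3 : Ej δ (lev c) ≤ δ / 3 := Ej_le_third hδ _
  have h0 : dist (x 0) (y 0) ^ 2 ≤ 1 := by
    obtain ⟨hx1, hx2⟩ := hx.1 0
    obtain ⟨hy1, hy2⟩ := hy.1 0
    rw [Real.dist_eq, sq_abs]
    nlinarith
  have hs : ∀ i : Fin d, dist (x i.succ) (y i.succ) ^ 2 ≤ δ ^ 2 := by
    intro i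
    have h1 := hx.2 i
    have h2 := hy.2 i
    rw [Real.dist_eq, sq_abs]
    rcases hci : c i with v | a <;> rw [hci] at h1 h2 <;> simp only [Sum.map_inl, Sum.map_inr,
      cond_inl, cond_inr] at h1 h2
    · nlinarith [h1.1, h1.2, h2.1, h2.2]
    · nlinarith [h1.1, h1.2, h2.1, h2.2]
  have hsum : ∑ i : Fin d, dist (x i.succ) (y i.succ) ^ 2 ≤ (d : ℝ) * δ ^ 2 := by
    calc ∑ i : Fin d, dist (x i.succ) (y i.succ) ^ 2 ≤ ∑ _i : Fin d, δ ^ 2 :=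
          Finset.sum_le_sum fun i _ => hs i
    _ = (d : ℝ) * δ ^ 2 := by
          simp [Finset.sum_const, Finset.card_univ, nsmul_eq_mul]
  linarith

lemma cover {d N : ℕ} {δ : ℝ} (hN : 0 < N) (hδ : δ = 1 / N)
    (x : EuclideanSpace ℝ (Fin (d + 1))) (hx : ∀ i, x i ∈ Set.Icc (0:ℝ) 1) :
    ∃ c : Fin d → Fin (N + 1) ⊕ Fin N, x ∈ Abrick d N δ c := by
  classical
  have hNR : (0 : ℝ) < N := by exact_mod_cast hN
  have hδ0 : 0 < δ := by rw [hδ]; exact one_div_pos.mpr hNR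
  have hNδ : (N : ℝ) * δ = 1 := by rw [hδ]; field_simp
  set t : Fin d → ℝ := fun i => x i.succ with ht
  set k : Fin d → ℤ := fun i => round ((N : ℝ) * t i) with hk
  set g : Fin d → ℝ := fun i => |t i - (k i : ℝ) * δ| with hg
  set S : ℕ → Finset (Fin d) := fun j => Finset.univ.filter (fun i => Ej δ j < g i) with hS
  have hmemS : ∀ j (i : Fin d), i ∈ S j ↔ Ej δ j < g i := by
    intro j i
    simp [hS]
  have hSmono : ∀ j j', j ≤ j' → S j ⊆ S j' := by
    intro j j' hjj' i hi
    rw [hmemS] at hi ⊢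
    exact lt_of_le_of_lt (Ej_anti hδ0 hjj') hi
  have hex : ∃ j, (S j).card ≤ j := by
    refine ⟨d, ?_⟩
    calc (S d).card ≤ (Finset.univ : Finset (Fin d)).card :=
          Finset.card_le_card (Finset.filter_subset _ _)
    _ = d := by simp
  set j0 := Nat.find hex with hj0def
  have hj0 : (S j0).card ≤ j0 := Nat.find_spec hex
  have hScard : (S j0).card = j0 := by
    rcases Nat.eq_zero_or_pos j0 with h0 | hpos
    · omega
    · have h1 : ¬ ((S (j0 - 1)).card ≤ j0 - 1) := Nat.find_min hex (by omega)
      have hsub : S (j0 - 1) ⊆ S j0 := hSmono _ _ (by omega)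
      have h2 : (S (j0 - 1)).card ≤ (S j0).card := Finset.card_le_card hsub
      omega
  have hfree : ∀ i ∈ S j0, 2 * Ej δ j0 ≤ g i := by
    intro i hi
    have hpos : 1 ≤ j0 := by
      have : 0 < (S j0).card := Finset.card_pos.mpr ⟨i, hi⟩
      omega
    have h1 : ¬ ((S (j0 - 1)).card ≤ j0 - 1) := Nat.find_min hex (by omega)
    have hsub : S (j0 - 1) ⊆ S j0 := hSmono _ _ (by omega)
    have heq : S (j0 - 1) = S j0 := Finset.eq_of_subset_of_card_le hsub (by omega)
    have hi' : i ∈ S (j0 - 1) := heq ▸ hi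
    have h2 : Ej δ (j0 - 1) < g i := (hmemS _ _).mp hi'
    rw [Ej_pred hpos] at h2
    have := Ej_pos hδ0 j0
    linarith
  have hattached : ∀ i, i ∉ S j0 → g i ≤ Ej δ j0 := by
    intro i hi
    by_contra h
    push_neg at h
    exact hi ((hmemS _ _).mpr h)
  clear hj0def
  clear_value t k g S j0
  clear hex hj0
  have hchoice : ∀ i : Fin d, ∃ y : Fin (N + 1) ⊕ Fin N,
      ((i ∈ S j0) → y.isRight = true) ∧ ((i ∉ S j0) → y.isLeft = true) ∧
      cond δ (Ej δ j0) (x i.succ) (Sum.map Fin.val Fin.val y) := by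
    intro i
    have hxt : x i.succ = t i := by rw [ht]
    have hkrnd : k i = round ((N : ℝ) * t i) := by rw [hk]
    have hgdef : g i = |t i - (k i : ℝ) * δ| := by rw [hg]
    have ht01 : 0 ≤ t i ∧ t i ≤ 1 := by
      rw [← hxt]; exact ⟨(hx i.succ).1, (hx i.succ).2⟩
    have hq0 : 0 ≤ (N : ℝ) * t i := mul_nonneg hNR.le ht01.1
    by_cases hi : i ∈ S j0
    · -- free coordinate
      have hEpos : 0 < Ej δ j0 := Ej_pos hδ0 _
      have hfr : 2 * Ej δ j0 ≤ g i := hfree i hi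
      have hj1 : 1 ≤ j0 := by
        have : 0 < (S j0).card := Finset.card_pos.mpr ⟨i, hi⟩
        omega
      have hE9 : Ej δ j0 ≤ δ / 9 := Ej_le_ninth hδ0 hj1
      set q : ℝ := (N : ℝ) * t i with hqdef
      have htq : (q : ℝ) * δ = t i := by
        calc q * δ = t i * ((N : ℝ) * δ) := by rw [hqdef]; ring
        _ = t i := by rw [hNδ, mul_one]
      have ht1 : t i < 1 := by
        rcases lt_or_eq_of_le ht01.2 with h | h
        · exact h
        · exfalso
          have hkN : (k i : ℝ) = (N : ℝ) := by
            have hqN' : q = (N : ℝ) := by rw [hqdef, h, mul_one]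
            rw [hkrnd, hqN', round_natCast]
            push_cast
            ring
          have hgz : g i = 0 := by
            rw [hgdef, hkN, hNδ, h]
            simp
          rw [hgz] at hfr
          linarith
      have hqN : q < N := by
        rw [hqdef]
        nlinarith
      have hfl0 : 0 ≤ ⌊q⌋ := Int.floor_nonneg.mpr hq0
      have hflN : ⌊q⌋ < (N : ℤ) := by
        apply Int.floor_lt.mpr
        exact_mod_cast hqN
      have hfle : ((⌊q⌋ : ℤ) : ℝ) ≤ q := Int.floor_le q
      have hflt : q < ((⌊q⌋ : ℤ) : ℝ) + 1 := Int.lt_floor_add_one q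
      have hkq : ((round q : ℤ) : ℝ) = (k i : ℝ) := by rw [hkrnd, hqdef]
      have hround : (k i : ℝ) = ((⌊q⌋ : ℤ) : ℝ) ∨ (k i : ℝ) = ((⌊q⌋ : ℤ) : ℝ) + 1 := by
        rcases lt_or_ge (q - ((⌊q⌋ : ℤ) : ℝ)) (1/2) with hcase | hcase
        · left
          have hh : round q = ⌊q⌋ := by
            rw [round_eq]
            apply Int.floor_eq_iff.mpr
            constructor <;> push_cast <;> linarith
          rw [← hkq, hh]
        · right
          have hh : round q = ⌊q⌋ + 1 := by
            rw [round_eq]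
            apply Int.floor_eq_iff.mpr
            constructor <;> push_cast <;> linarith
          rw [← hkq, hh]
          push_cast
          ring
      refine ⟨Sum.inr ⟨(⌊q⌋).toNat, by omega⟩, by simp, by simp [hi], ?_⟩
      simp only [Sum.map_inr, cond_inr]
      have hcast : (((⌊q⌋).toNat : ℕ) : ℝ) = ((⌊q⌋ : ℤ) : ℝ) := by
        exact_mod_cast Int.toNat_of_nonneg hfl0
      rw [hcast, hxt]
      have hglow : 2 * Ej δ j0 ≤ |t i - (k i : ℝ) * δ| := by rw [← hgdef]; exact hfr
      rcases hround with hr | hr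
      · have h1 : t i - ((⌊q⌋ : ℤ) : ℝ) * δ = (q - ((⌊q⌋ : ℤ) : ℝ)) * δ := by
          rw [← htq]; ring
        have hnn : 0 ≤ t i - ((⌊q⌋ : ℤ) : ℝ) * δ := by rw [h1]; nlinarith
        rw [hr, abs_of_nonneg hnn] at hglow
        constructor
        · linarith
        · have habs := abs_sub_round q
          rw [hkq, hr] at habs
          have h2 : q - ((⌊q⌋ : ℤ) : ℝ) ≤ 1/2 := by
            have h4 := abs_le.mp habs
            linarith [h4.1, h4.2]
          have h3 : (((⌊q⌋ : ℤ) : ℝ) + 1) * δ - t i = (((⌊q⌋ : ℤ) : ℝ) + 1 - q) * δ := by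
            rw [← htq]; ring
          nlinarith
      · have h1 : (((⌊q⌋ : ℤ) : ℝ) + 1) * δ - t i = (((⌊q⌋ : ℤ) : ℝ) + 1 - q) * δ := by
          rw [← htq]; ring
        have hnn : 0 ≤ (((⌊q⌋ : ℤ) : ℝ) + 1) * δ - t i := by rw [h1]; nlinarith
        rw [hr] at hglow
        have habs' : |t i - (((⌊q⌋ : ℤ) : ℝ) + 1) * δ| = (((⌊q⌋ : ℤ) : ℝ) + 1) * δ - t i := by
          rw [abs_sub_comm]
          exact abs_of_nonneg hnn
        rw [habs'] at hglow
        constructor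
        · have habs := abs_sub_round q
          rw [hkq, hr] at habs
          have h2 : ((⌊q⌋ : ℤ) : ℝ) + 1 - q ≤ 1/2 := by
            have h4 := abs_le.mp habs
            linarith [h4.1, h4.2]
          have h3 : t i - ((⌊q⌋ : ℤ) : ℝ) * δ = (q - ((⌊q⌋ : ℤ) : ℝ)) * δ := by
            rw [← htq]; ring
          nlinarith
        · linarith
    · -- attached coordinate
      have hg' : g i ≤ Ej δ j0 := hattached i hi
      have habs := abs_sub_round ((N : ℝ) * t i)
      have hkr : ((round ((N : ℝ) * t i) : ℤ) : ℝ) = (k i : ℝ) := by rw [hkrnd]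
      rw [hkr] at habs
      have hk0 : 0 ≤ k i := by
        have h1 : (-1 : ℝ) < (k i : ℝ) := by
          nlinarith [abs_le.mp habs, ht01.1]
        have h2 : ((-1 : ℤ) : ℝ) < (k i : ℝ) := by push_cast; linarith
        have h3 : (-1 : ℤ) < k i := by exact_mod_cast h2
        omega
      have hkN : k i ≤ (N : ℤ) := by
        have h1 : (k i : ℝ) < ((N : ℤ) : ℝ) + 1 := by
          push_cast
          nlinarith [abs_le.mp habs, ht01.2]
        have h3 : k i < (N : ℤ) + 1 := by exact_mod_cast h1
        omega
      refine ⟨Sum.inl ⟨(k i).toNat, by omega⟩, by simp at hi ⊢; tauto, by simp, ?_⟩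
      simp only [Sum.map_inl, cond_inl]
      have hcast : (((k i).toNat : ℕ) : ℝ) = (k i : ℝ) := by
        exact_mod_cast Int.toNat_of_nonneg hk0
      rw [hcast, hxt]
      have hgg : |t i - (k i : ℝ) * δ| ≤ Ej δ j0 := by rw [← hgdef]; exact hg'
      have h4 := abs_le.mp hgg
      constructor <;> linarith [h4.1, h4.2]
  choose c hc1 hc2 hc3 using hchoice
  have hlev : lev c = j0 := by
    rw [lev]
    have heq : Finset.univ.filter (fun i => (c i).isRight = true) = S j0 := by
      ext i
      simp only [Finset.mem_filter, Finset.mem_univ, true_and]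
      constructor
      · intro hr
        by_contra hi
        have hl := hc2 i hi
        rcases hy : c i with v | a
        · rw [hy] at hr; simp at hr
        · rw [hy] at hl; simp at hl
      · intro hi
        exact hc1 i hi
    rw [heq, hScard]
  exact ⟨c, ⟨hx, by rw [hlev] at *; exact fun i => hc3 i⟩⟩

lemma unique {d N : ℕ} {δ : ℝ} (hδ : 0 < δ) {c₁ c₂ : Fin d → Fin (N + 1) ⊕ Fin N}
    (hlev : lev c₁ = lev c₂) {x : EuclideanSpace ℝ (Fin (d + 1))}
    (h1 : x ∈ Abrick d N δ c₁) (h2 : x ∈ Abrick d N δ c₂) : c₁ = c₂ := by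
  funext i
  have e1 := h1.2 i
  have e2 := h2.2 i
  rw [hlev] at e1
  set e := Ej δ (lev c₂) with he
  have hepos : 0 < e := Ej_pos hδ _
  have helt : 2 * e < δ := by
    have h3 := Ej_le_third hδ (lev c₂)
    rw [← he] at h3
    linarith
  rcases hc1 : c₁ i with v₁ | a₁ <;> rcases hc2 : c₂ i with v₂ | a₂ <;>
    rw [hc1] at e1 <;> rw [hc2] at e2 <;>
    simp only [Sum.map_inl, Sum.map_inr, cond_inl, cond_inr] at e1 e2
  · congr 1
    have h5 : |((v₁ : ℕ) : ℝ) * δ - ((v₂ : ℕ) : ℝ) * δ| ≤ 2 * e := by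
      rw [abs_le]
      constructor <;> linarith [e1.1, e1.2, e2.1, e2.2]
    have h6 : |((v₁ : ℕ) : ℝ) - ((v₂ : ℕ) : ℝ)| * δ ≤ 2 * e := by
      calc |((v₁ : ℕ) : ℝ) - ((v₂ : ℕ) : ℝ)| * δ
          = |((v₁ : ℕ) : ℝ) - ((v₂ : ℕ) : ℝ)| * |δ| := by rw [abs_of_pos hδ]
      _ = |(((v₁ : ℕ) : ℝ) - ((v₂ : ℕ) : ℝ)) * δ| := (abs_mul _ _).symm
      _ = |((v₁ : ℕ) : ℝ) * δ - ((v₂ : ℕ) : ℝ) * δ| := by rw [sub_mul]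
      _ ≤ 2 * e := h5
    have h7 : |((v₁ : ℕ) : ℝ) - ((v₂ : ℕ) : ℝ)| < 1 := by
      by_contra hcon
      push_neg at hcon
      nlinarith [abs_nonneg (((v₁ : ℕ) : ℝ) - ((v₂ : ℕ) : ℝ))]
    have h8 : |((v₁ : ℕ) : ℤ) - ((v₂ : ℕ) : ℤ)| < 1 := by
      have hcast : |(((((v₁ : ℕ) : ℤ) - ((v₂ : ℕ) : ℤ)) : ℤ) : ℝ)| < 1 := by
        push_cast
        exact h7
      exact_mod_cast hcast
    have : (v₁ : ℕ) = (v₂ : ℕ) := by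
      rcases abs_lt.mp h8 with ⟨ha, hb⟩
      omega
    exact Fin.ext this
  · exfalso
    rcases le_or_gt ((v₁ : ℕ)) ((a₂ : ℕ)) with h | h
    · have hc : ((v₁ : ℕ) : ℝ) * δ ≤ ((a₂ : ℕ) : ℝ) * δ := by
        apply mul_le_mul_of_nonneg_right _ hδ.le
        exact_mod_cast h
      linarith [e1.1, e1.2, e2.1, e2.2]
    · have hc : (((a₂ : ℕ) : ℝ) + 1) * δ ≤ ((v₁ : ℕ) : ℝ) * δ := by
        apply mul_le_mul_of_nonneg_right _ hδ.le
        have hh : ((a₂ : ℕ) + 1 : ℕ) ≤ (v₁ : ℕ) := h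
        exact_mod_cast hh
      linarith [e1.1, e1.2, e2.1, e2.2]
  · exfalso
    rcases le_or_gt ((v₂ : ℕ)) ((a₁ : ℕ)) with h | h
    · have hc : ((v₂ : ℕ) : ℝ) * δ ≤ ((a₁ : ℕ) : ℝ) * δ := by
        apply mul_le_mul_of_nonneg_right _ hδ.le
        exact_mod_cast h
      linarith [e1.1, e1.2, e2.1, e2.2]
    · have hc : (((a₁ : ℕ) : ℝ) + 1) * δ ≤ ((v₂ : ℕ) : ℝ) * δ := by
        apply mul_le_mul_of_nonneg_right _ hδ.le
        have hh : ((a₁ : ℕ) + 1 : ℕ) ≤ (v₂ : ℕ) := h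
        exact_mod_cast hh
      linarith [e1.1, e1.2, e2.1, e2.2]
  · congr 1
    rcases lt_trichotomy ((a₁ : ℕ)) ((a₂ : ℕ)) with h | h | h
    · exfalso
      have hc : (((a₁ : ℕ) : ℝ) + 1) * δ ≤ ((a₂ : ℕ) : ℝ) * δ := by
        apply mul_le_mul_of_nonneg_right _ hδ.le
        have hh : ((a₁ : ℕ) + 1 : ℕ) ≤ (a₂ : ℕ) := h
        exact_mod_cast hh
      linarith [e1.1, e1.2, e2.1, e2.2]
    · exact Fin.ext h
    · exfalso
      have hc : (((a₂ : ℕ) : ℝ) + 1) * δ ≤ ((a₁ : ℕ) : ℝ) * δ := by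
        apply mul_le_mul_of_nonneg_right _ hδ.le
        have hh : ((a₂ : ℕ) + 1 : ℕ) ≤ (a₁ : ℕ) := h
        exact_mod_cast hh
      linarith [e1.1, e1.2, e2.1, e2.2]

lemma lev_le {d N : ℕ} (c : Fin d → Fin (N + 1) ⊕ Fin N) : lev c ≤ d := by
  rw [lev]
  calc _ ≤ (Finset.univ : Finset (Fin d)).card := Finset.card_le_card (Finset.filter_subset _ _)
  _ = d := by simp

end LebSharp

set_option maxHeartbeats 2000000 in
open Metric Set

/-- Sharpness of Lebesgue's theorem: the unit `n`-cube can be covered by finitely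
many closed sets of diameter at most `1 + ε` meeting at most `n` at a point. -/
theorem lebesgue_sharp (n : ℕ) (hn : 1 ≤ n) (ε : ℝ) (hε : 0 < ε)
    (C : Set (EuclideanSpace ℝ (Fin n)))
    (hC : C = {x | ∀ i, x i ∈ Set.Icc (0:ℝ) 1}) :
    ∃ (m : ℕ) (A : Fin m → Set (EuclideanSpace ℝ (Fin n))),
      (∀ j, IsClosed (A j)) ∧
      (⋃ j, A j) = C ∧
      (∀ j, Metric.diam (A j) ≤ 1 + ε) ∧
      (∀ x : EuclideanSpace ℝ (Fin n),
        ∀ s : Finset (Fin m), (∀ j ∈ s, x ∈ A j) → s.card ≤ n) := by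
  subst hC
  obtain ⟨d, rfl⟩ : ∃ d, n = d + 1 := ⟨n - 1, by omega⟩
  classical
  set N : ℕ := max 1 ⌈(d : ℝ) / (2 * ε)⌉₊ with hNdef
  have hN0 : 0 < N := lt_of_lt_of_le one_pos (le_max_left _ _)
  have hN1 : (1 : ℝ) ≤ (N : ℝ) := by exact_mod_cast hN0
  have hNbig : (d : ℝ) / (2 * ε) ≤ (N : ℝ) := by
    calc (d : ℝ) / (2 * ε) ≤ (⌈(d : ℝ) / (2 * ε)⌉₊ : ℝ) := Nat.le_ceil _
    _ ≤ (N : ℝ) := by exact_mod_cast le_max_right _ _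
  set δ : ℝ := 1 / (N : ℝ) with hδdef
  have hδ0 : 0 < δ := by rw [hδdef]; positivity
  have hδ1 : δ ≤ 1 := by
    rw [hδdef, div_le_one (by positivity)]
    exact hN1
  have hdδ : (d : ℝ) * δ ^ 2 ≤ 2 * ε := by
    have h1 : (d : ℝ) ≤ 2 * ε * N := by
      rw [div_le_iff₀ (by positivity)] at hNbig
      linarith
    have hδN : δ * (N : ℝ) = 1 := by rw [hδdef]; field_simp
    have hd0 : (0:ℝ) ≤ (d:ℝ) := Nat.cast_nonneg d
    have hsq : δ ^ 2 ≤ δ := by nlinarith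
    have h2 : (d : ℝ) * δ ^ 2 ≤ (d : ℝ) * δ := mul_le_mul_of_nonneg_left hsq hd0
    have h3 : (d : ℝ) * δ ≤ 2 * ε := by nlinarith
    linarith
  set I := (Fin d → Fin (N + 1) ⊕ Fin N) with hIdef
  set e : Fin (Fintype.card I) ≃ I := (Fintype.equivFin I).symm with hedef
  refine ⟨Fintype.card I, fun j => LebSharp.Abrick d N δ (e j), ?_, ?_, ?_, ?_⟩
  · intro j
    exact LebSharp.isClosed_Abrick d N δ (e j)
  · ext x
    simp only [Set.mem_iUnion, Set.mem_setOf_eq]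
    constructor
    · rintro ⟨j, hj⟩
      exact hj.1
    · intro hx
      obtain ⟨c, hc⟩ := LebSharp.cover hN0 hδdef x hx
      exact ⟨e.symm c, by simpa using hc⟩
  · intro j
    apply Metric.diam_le_of_forall_dist_le (by linarith)
    intro x hx y hy
    calc dist x y ≤ Real.sqrt (1 + d * δ ^ 2) := LebSharp.dist_le_of_mem hδ0 hx hy
    _ ≤ 1 + ε := by
        rw [show (1:ℝ) + ε = Real.sqrt ((1 + ε) ^ 2) by rw [Real.sqrt_sq (by linarith)]]
        apply Real.sqrt_le_sqrt
        nlinarith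
  · intro x s hs
    have hinj : Set.InjOn (fun j => LebSharp.lev (e j)) (s : Set (Fin (Fintype.card I))) := by
      intro j₁ hj₁ j₂ hj₂ hlev
      apply e.injective
      exact LebSharp.unique hδ0 hlev (hs j₁ hj₁) (hs j₂ hj₂)
    calc s.card ≤ (Finset.range (d + 1)).card := by
          apply Finset.card_le_card_of_injOn (fun j => LebSharp.lev (e j))
          · intro j hj
            simp only [Finset.mem_coe, Finset.mem_range]
            exact Nat.lt_succ_of_le (LebSharp.lev_le (e j))
          · exact hinj
    _ = d + 1 := Finset.card_range _
end

section
/- If $B\subset S^{n-1}$ is not contained in any open hemisphere, then the diameter of $B$ is at least $\sqrt{2+2/n}$, with equality only if the closure of $B$ contains (indeed equals, when $B$ is closed) the vertex set of a regular $n$-simplex inscribed in $S^{n-1}$. -/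
open Metric Set Finset

local notation "⟪" x ", " y "⟫" => @inner ℝ _ _ x y


lemma aux_isCompact_convexHull {n : ℕ} {s : Set (EuclideanSpace ℝ (Fin n))}
    (hs : IsCompact s) (hne : s.Nonempty) : IsCompact (convexHull ℝ s) := by
  classical
  obtain ⟨s₀, hs₀⟩ := hne
  set N := n + 1 with hN
  set f : (Fin N → ℝ) × (Fin N → EuclideanSpace ℝ (Fin n)) → EuclideanSpace ℝ (Fin n) := fun p => ∑ i, p.1 i • p.2 i with hfdef
  have hf : Continuous f := by
    apply continuous_finset_sum
    intro i _
    exact ((continuous_apply i).comp continuous_fst).smul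
      ((continuous_apply i).comp continuous_snd)
  have hT : IsCompact ((stdSimplex ℝ (Fin N)) ×ˢ Set.univ.pi fun _ : Fin N => s) :=
    (isCompact_stdSimplex _ _).prod (isCompact_univ_pi fun _ => hs)
  have himg : convexHull ℝ s = f '' ((stdSimplex ℝ (Fin N)) ×ˢ Set.univ.pi fun _ : Fin N => s) := by
    apply Set.Subset.antisymm
    · intro x hx
      obtain ⟨ι, hι, z, w, hzs, hai, hw0, hw1, hxx⟩ := eq_pos_convex_span_of_mem_convexHull hx
      have hcard : Fintype.card ι ≤ N := by
        have h1 := hai.card_le_finrank_succ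
        have h2 : Module.finrank ℝ (vectorSpan ℝ (Set.range z)) ≤ n := by
          simpa [finrank_euclideanSpace_fin] using
            (Submodule.finrank_le (vectorSpan ℝ (Set.range z)))
        omega
      obtain ⟨g⟩ : Nonempty (ι ↪ Fin N) :=
        Function.Embedding.nonempty_of_card_le (by simpa using hcard)
      set W : Fin N → ℝ := fun j => if h : ∃ i, g i = j then w h.choose else 0 with hW
      set Z : Fin N → EuclideanSpace ℝ (Fin n) := fun j => if h : ∃ i, g i = j then z h.choose else s₀ with hZ
      have hWg : ∀ i, W (g i) = w i := by
        intro i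
        have h : ∃ i', g i' = g i := ⟨i, rfl⟩
        simp only [hW, dif_pos h]
        rw [g.injective h.choose_spec]
      have hZg : ∀ i, Z (g i) = z i := by
        intro i
        have h : ∃ i', g i' = g i := ⟨i, rfl⟩
        simp only [hZ, dif_pos h]
        rw [g.injective h.choose_spec]
      have hWoff : ∀ j ∉ Finset.univ.image g, W j = 0 := by
        intro j hj
        have : ¬ ∃ i, g i = j := by
          rintro ⟨i, rfl⟩; exact hj (Finset.mem_image_of_mem g (Finset.mem_univ i))
        simp [hW, this]
      
      have hWsum : ∑ j, W j = 1 := by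
        rw [← Finset.sum_subset (Finset.subset_univ (Finset.univ.image g))
          (fun j _ hj => hWoff j hj)]
        rw [Finset.sum_image (fun a _ b _ h => g.injective h)]
        simpa [hWg] using hw1
      have hWZsum : ∑ j, W j • Z j = x := by
        rw [← Finset.sum_subset (Finset.subset_univ (Finset.univ.image g))
          (fun j _ hj => by simp [hWoff j hj])]
        rw [Finset.sum_image (fun a _ b _ h => g.injective h)]
        simpa [hWg, hZg] using hxx
      refine ⟨(W, Z), ⟨⟨?_, hWsum⟩, ?_⟩, hWZsum⟩
      · intro j
        by_cases h : ∃ i, g i = j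
        · simp only [hW, dif_pos h]; exact (hw0 _).le
        · simp [hW, h]
      · intro j _
        by_cases h : ∃ i, g i = j
        · simp only [hZ, dif_pos h]
          exact hzs ⟨_, rfl⟩
        · simpa [hZ, h] using hs₀
    · rintro _ ⟨⟨W, Z⟩, ⟨⟨hW0, hW1⟩, hZ⟩, rfl⟩
      have := Finset.centerMass_mem_convexHull (t := Finset.univ) (w := W) (z := Z)
        (fun i _ => hW0 i) (by rw [hW1]; norm_num) (fun i _ => hZ i (Set.mem_univ i))
      rwa [Finset.centerMass_eq_of_sum_1 _ _ hW1] at this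
  rw [himg]
  exact hT.image hf

lemma aux_inner_sum_sum {E : Type*} [NormedAddCommGroup E] [InnerProductSpace ℝ E]
    {ι : Type*} [Fintype ι] (c : ι → ℝ) (z : ι → E) :
    ⟪∑ i, c i • z i, ∑ j, c j • z j⟫
      = ∑ i, ∑ j, c i * c j * ⟪z i, z j⟫ := by
  rw [sum_inner]
  refine Finset.sum_congr rfl fun i _ => ?_
  rw [inner_sum]
  refine Finset.sum_congr rfl fun j _ => ?_
  rw [real_inner_smul_left, real_inner_smul_right]; ring

lemma aux_sum_split {ι : Type*} [Fintype ι] [DecidableEq ι] (f : ι → ι → ℝ) :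
    ∑ i, ∑ j, f i j = (∑ i, f i i) + ∑ i, ∑ j ∈ Finset.univ.erase i, f i j := by
  rw [← Finset.sum_add_distrib]
  exact Finset.sum_congr rfl fun i _ => (Finset.add_sum_erase _ _ (Finset.mem_univ i)).symm

lemma aux_rigid {n : ℕ} (hn : 1 ≤ n) (w : Fin (n + 1) → EuclideanSpace ℝ (Fin n))
    (hw1 : ∀ i, ‖w i‖ = 1)
    (hw2 : ∀ i j, i ≠ j → ⟪w i, w j⟫ = -1 / n)
    (x : EuclideanSpace ℝ (Fin n)) (hx : ‖x‖ = 1)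
    (hxw : ∀ i, (-1 / n : ℝ) ≤ ⟪x, w i⟫) : ∃ j, x = w j := by
  classical
  have hnR : (1 : ℝ) ≤ n := by exact_mod_cast hn
  have hn0 : (n : ℝ) ≠ 0 := by positivity
  have hself : ∀ i, ⟪w i, w i⟫ = 1 := fun i => by
    rw [real_inner_self_eq_norm_sq, hw1]; norm_num
  -- sum of vertices is zero
  have hwsum : ∑ i, w i = 0 := by
    rw [← inner_self_eq_zero (𝕜 := ℝ)]
    have h1 : ⟪∑ i, w i, ∑ j, w j⟫ = ∑ i, ∑ j, ⟪w i, w j⟫ := by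
      simpa using aux_inner_sum_sum (fun _ : Fin (n + 1) => (1 : ℝ)) w
    rw [h1, aux_sum_split]
    have hdiag : ∑ i, ⟪w i, w i⟫ = (n + 1 : ℝ) := by
      rw [Finset.sum_congr rfl fun i _ => hself i]; simp
    have hoff : ∑ i : Fin (n + 1), ∑ j ∈ Finset.univ.erase i, ⟪w i, w j⟫
        = (n + 1 : ℝ) * (n * (-1 / n)) := by
      have : ∀ i : Fin (n + 1), ∑ j ∈ Finset.univ.erase i, ⟪w i, w j⟫ = n * (-1 / n) := by
        intro i
        rw [Finset.sum_congr rfl fun j hj => hw2 i j (Ne.symm (Finset.mem_erase.mp hj).1)]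
        rw [Finset.sum_const, Finset.card_erase_of_mem (Finset.mem_univ i)]
        simp [mul_comm]
      rw [Finset.sum_congr rfl fun i _ => this i, Finset.sum_const]
      simp [mul_comm]
    rw [hdiag, hoff]
    field_simp
    ring
  set a : Fin (n + 1) → ℝ := fun i => ⟪x, w i⟫ with ha
  have hasum : ∑ i, a i = 0 := by
    have : ∑ i, a i = ⟪x, ∑ i, w i⟫ := (inner_sum _ _ _).symm
    rw [this, hwsum, inner_zero_right]
  -- linear independence of the first n vertices
  haveI : Nonempty (Fin n) := ⟨⟨0, hn⟩⟩
  set v : Fin n → EuclideanSpace ℝ (Fin n) := fun i => w i.castSucc with hv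
  have hli : LinearIndependent ℝ v := by
    rw [Fintype.linearIndependent_iff]
    intro c hc
    have h0 : (0 : ℝ) = ∑ i, ∑ j, c i * c j * ⟪v i, v j⟫ := by
      rw [← aux_inner_sum_sum, hc, inner_zero_left]
    have hoffsum : ∑ i : Fin n, ∑ j ∈ Finset.univ.erase i, c i * c j
        = (∑ i, c i) ^ 2 - ∑ i, c i ^ 2 := by
      have := aux_sum_split (fun i j : Fin n => c i * c j)
      have hsq : (∑ i, c i) ^ 2 = ∑ i : Fin n, ∑ j : Fin n, c i * c j := by
        rw [sq, Finset.sum_mul_sum]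
      rw [hsq, this]
      simp [sq]
    have hcomp : ∑ i, ∑ j, c i * c j * ⟪v i, v j⟫
        = ∑ i, c i ^ 2 + (-1 / n) * ((∑ i, c i) ^ 2 - ∑ i, c i ^ 2) := by
      rw [aux_sum_split]
      congr 1
      · exact Finset.sum_congr rfl fun i _ => by rw [hself]; ring
      · rw [← hoffsum, Finset.mul_sum]
        refine Finset.sum_congr rfl fun i _ => ?_
        rw [Finset.mul_sum]
        refine Finset.sum_congr rfl fun j hj => ?_
        have hij : i.castSucc ≠ j.castSucc := by
          simp [Fin.castSucc_inj]
          exact Ne.symm (Finset.mem_erase.mp hj).1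
        rw [hw2 _ _ hij]; ring
    have hCS : (∑ i, c i) ^ 2 ≤ (n : ℝ) * ∑ i, c i ^ 2 := by
      have := sq_sum_le_card_mul_sum_sq (s := (Finset.univ : Finset (Fin n))) (f := c)
      simpa using this
    have hS0 : 0 ≤ ∑ i, c i ^ 2 := Finset.sum_nonneg fun i _ => sq_nonneg _
    have hsum0 : ∑ i, c i ^ 2 ≤ 0 := by
      rw [hcomp] at h0
      have hkey : (∑ i, c i) ^ 2 - ∑ i, c i ^ 2 = (n : ℝ) * ∑ i, c i ^ 2 := by
        have h2 : (-1 / (n : ℝ)) * ((∑ i, c i) ^ 2 - ∑ i, c i ^ 2) = -∑ i, c i ^ 2 := by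
          linarith
        calc (∑ i, c i) ^ 2 - ∑ i, c i ^ 2
            = (-(n : ℝ)) * ((-1 / n) * ((∑ i, c i) ^ 2 - ∑ i, c i ^ 2)) := by
              field_simp
          _ = (-(n : ℝ)) * (-∑ i, c i ^ 2) := by rw [h2]
          _ = (n : ℝ) * ∑ i, c i ^ 2 := by ring
      nlinarith
    intro i
    have h1 : c i ^ 2 ≤ 0 := le_trans (Finset.single_le_sum (fun j _ => sq_nonneg (c j))
      (Finset.mem_univ i)) hsum0
    have := le_antisymm h1 (sq_nonneg _)
    exact pow_eq_zero_iff (by norm_num) |>.mp this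
  have hspan : Submodule.span ℝ (Set.range v) = ⊤ :=
    hli.span_eq_top_of_card_eq_finrank (by simp [finrank_euclideanSpace_fin])
  -- u is orthogonal to all vertices
  set u : EuclideanSpace ℝ (Fin n) :=
    x - ((n : ℝ) / (n + 1)) • ∑ i, a i • w i with hu
  have hip : ∀ j, ⟪∑ i, a i • w i, w j⟫ = a j * ((n + 1) / n) := by
    intro j
    rw [sum_inner]
    have : ∀ i, ⟪a i • w i, w j⟫ = a i * ⟪w i, w j⟫ := fun i => real_inner_smul_left _ _ _
    rw [Finset.sum_congr rfl fun i _ => this i]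
    rw [← Finset.add_sum_erase _ _ (Finset.mem_univ j), hself j]
    have herase : ∑ i ∈ Finset.univ.erase j, a i * ⟪w i, w j⟫
        = (-1 / n) * (- a j) := by
      rw [Finset.sum_congr rfl fun i hi => by
        rw [hw2 i j (Finset.mem_erase.mp hi).1, mul_comm]]
      rw [← Finset.mul_sum, Finset.sum_erase_eq_sub (Finset.mem_univ j), hasum]
      ring
    rw [herase]
    field_simp
  have hucp : ∀ j, ⟪u, w j⟫ = 0 := by
    intro j
    rw [hu, inner_sub_left, real_inner_smul_left, hip j]
    have haj : ⟪x, w j⟫ = a j := rfl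
    rw [haj]
    have hn1 : (n : ℝ) + 1 ≠ 0 := by positivity
    field_simp
    ring
  have hu0 : u = 0 := by
    have hmem : u ∈ Submodule.span ℝ (Set.range v) := by rw [hspan]; trivial
    obtain ⟨c, hc⟩ := (Submodule.mem_span_range_iff_exists_fun ℝ).mp hmem
    have h2 : ⟪u, u⟫ = 0 := by
      calc ⟪u, u⟫ = ⟪u, ∑ i, c i • v i⟫ := by rw [hc]
        _ = ∑ i, c i * ⟪u, v i⟫ := by
            rw [inner_sum]
            exact Finset.sum_congr rfl fun i _ => real_inner_smul_right _ _ _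
        _ = 0 := Finset.sum_eq_zero fun i _ => by rw [hv]; rw [hucp]; ring
    exact inner_self_eq_zero.mp h2
  have hxeq : x = ((n : ℝ) / (n + 1)) • ∑ i, a i • w i := by
    have := sub_eq_zero.mp hu0
    exact this
  have hxx : ⟪x, x⟫ = 1 := by rw [real_inner_self_eq_norm_sq, hx]; norm_num
  have hsumsq : ∑ i, a i ^ 2 = ((n : ℝ) + 1) / n := by
    have h1 : (1 : ℝ) = ((n : ℝ) / (n + 1)) * ∑ i, a i ^ 2 := by
      calc (1 : ℝ) = ⟪x, x⟫ := hxx.symm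
        _ = ((n : ℝ) / (n + 1)) * ⟪x, ∑ i, a i • w i⟫ := by
            nth_rewrite 2 [hxeq]
            rw [real_inner_smul_right]
        _ = ((n : ℝ) / (n + 1)) * ∑ i, a i ^ 2 := by
            rw [inner_sum]
            congr 1
            refine Finset.sum_congr rfl fun i _ => ?_
            rw [real_inner_smul_right]
            have : ⟪x, w i⟫ = a i := rfl
            rw [this]; ring
    have hn1 : (n : ℝ) + 1 ≠ 0 := by positivity
    field_simp at h1 ⊢
    linarith
  have hle1 : ∀ i, a i ≤ 1 := by
    intro i
    have := real_inner_le_norm x (w i)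
    rw [hx, hw1 i] at this
    simpa [ha] using this
  have hterms : ∑ i, (a i + 1 / n) * (1 - a i) = 0 := by
    have hexp : ∀ i : Fin (n + 1), (a i + 1 / n) * (1 - a i)
        = a i - a i ^ 2 + (1 / n) - (1 / n) * a i := by intro i; ring
    rw [Finset.sum_congr rfl fun i _ => hexp i]
    rw [Finset.sum_sub_distrib, Finset.sum_add_distrib, Finset.sum_sub_distrib,
      ← Finset.mul_sum, hasum, hsumsq, Finset.sum_const]
    simp only [Finset.card_univ, Fintype.card_fin, nsmul_eq_mul, mul_zero, sub_zero]
    push_cast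
    field_simp
    ring
  have hnn : ∀ i : Fin (n + 1), 0 ≤ (a i + 1 / n) * (1 - a i) := by
    intro i
    have h1 : 0 ≤ a i + 1 / n := by
      have h := hxw i
      have hdiv : (-1 / (n : ℝ)) = -(1 / n) := by ring
      have h' : (-1 / n : ℝ) ≤ a i := h
      rw [hdiv] at h'
      linarith
    have h2 : 0 ≤ 1 - a i := by linarith [hle1 i]
    positivity
  have heach : ∀ i ∈ Finset.univ, (a i + 1 / n) * (1 - a i) = 0 :=
    (Finset.sum_eq_zero_iff_of_nonneg fun i _ => hnn i).mp hterms
  have hex : ∃ j, a j = 1 := by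
    by_contra hno
    push_neg at hno
    have hall : ∀ i, a i = -1 / n := by
      intro i
      rcases mul_eq_zero.mp (heach i (Finset.mem_univ i)) with h | h
      · have : a i = -(1 / n) := by linarith
        rw [this]; ring
      · exact absurd (by linarith : a i = 1) (hno i)
    rw [Finset.sum_congr rfl fun i _ => hall i, Finset.sum_const] at hasum
    simp only [Finset.card_univ, Fintype.card_fin, nsmul_eq_mul] at hasum
    have : ((n : ℝ) + 1) * (-1 / n) < 0 := by
      apply mul_neg_of_pos_of_neg
      · positivity
      · rw [div_neg_iff]; right; constructor <;> [linarith; linarith]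
    push_cast at hasum
    linarith
  obtain ⟨j, hj⟩ := hex
  refine ⟨j, ?_⟩
  have hnorm : ‖x - w j‖ ^ 2 = 0 := by
    rw [norm_sub_sq_real, hx, hw1 j]
    have : ⟪x, w j⟫ = a j := rfl
    rw [this, hj]; ring
  have := pow_eq_zero_iff (two_ne_zero) |>.mp hnorm
  exact sub_eq_zero.mp (by rwa [norm_eq_zero] at this)

/-- If `B ⊆ Sⁿ⁻¹` is contained in no open hemisphere, then `diam B ≥ √(2 + 2/n)`,
with equality only if the closure of `B` contains (and, if `B` is closed, equals)
the vertex set of an inscribed regular `n`-simplex. -/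
theorem hemisphere_free_diameter_bound (n : ℕ) (hn : 1 ≤ n)
    (B : Set (EuclideanSpace ℝ (Fin n)))
    (hB : B ⊆ Metric.sphere (0 : EuclideanSpace ℝ (Fin n)) 1)
    (hhemi : ¬ ∃ v : EuclideanSpace ℝ (Fin n), v ≠ 0 ∧ ∀ x ∈ B, 0 < (inner ℝ v x : ℝ)) :
    Real.sqrt (2 + 2 / n) ≤ Metric.diam B ∧
      (Metric.diam B = Real.sqrt (2 + 2 / n) →
        ∃ w : Fin (n + 1) → EuclideanSpace ℝ (Fin n),
          (∀ i, ‖w i‖ = 1) ∧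
          (∀ i j, i ≠ j → (inner ℝ (w i) (w j) : ℝ) = -1 / n) ∧
          Set.range w ⊆ closure B ∧
          (IsClosed B → B = Set.range w)) := by
  classical
  have hnR : (1 : ℝ) ≤ n := by exact_mod_cast hn
  have hnpos : (0 : ℝ) < n := by linarith
  have hn0 : (n : ℝ) ≠ 0 := by positivity
  have hn1 : (n : ℝ) + 1 ≠ 0 := by positivity
  have hBne : B.Nonempty := by
    rcases Set.eq_empty_or_nonempty B with h | h
    · exfalso
      apply hhemi
      refine ⟨EuclideanSpace.single ⟨0, hn⟩ 1, ?_, ?_⟩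
      · intro h0
        have hns : ‖EuclideanSpace.single (⟨0, hn⟩ : Fin n) (1 : ℝ)‖ = 1 := by
          rw [EuclideanSpace.norm_single]; norm_num
        rw [h0] at hns
        simp at hns
      · intro x hx
        rw [h] at hx
        exact absurd hx (Set.notMem_empty x)
    · exact h
  have hBbd : Bornology.IsBounded B := Metric.isBounded_sphere.subset hB
  have hCs : closure B ⊆ Metric.sphere (0 : EuclideanSpace ℝ (Fin n)) 1 :=
    closure_minimal hB Metric.isClosed_sphere
  have hCnorm : ∀ p ∈ closure B, ‖p‖ = 1 := fun p hp => by
    have := hCs hp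
    rwa [Metric.mem_sphere, dist_zero_right] at this
  have hCbd : Bornology.IsBounded (closure B) := Metric.isBounded_sphere.subset hCs
  have hCcomp : IsCompact (closure B) := hBbd.isCompact_closure
  have hCne : (closure B).Nonempty := hBne.closure
  have hdiamC : Metric.diam (closure B) = Metric.diam B := Metric.diam_closure B
  -- step 1 : the origin lies in the convex hull of the closure of B
  have h0C : (0 : EuclideanSpace ℝ (Fin n)) ∈ convexHull ℝ (closure B) := by
    by_contra h0
    obtain ⟨f, u, hu0, hub⟩ := geometric_hahn_banach_point_closed
      (convex_convexHull ℝ (closure B)) (aux_isCompact_convexHull hCcomp hCne).isClosed h0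
    rw [map_zero] at hu0
    set v := (InnerProductSpace.toDual ℝ (EuclideanSpace ℝ (Fin n))).symm f with hv
    have hfv : ∀ y, ⟪v, y⟫ = f y := fun y => InnerProductSpace.toDual_symm_apply
    apply hhemi
    refine ⟨v, ?_, ?_⟩
    · obtain ⟨b, hb⟩ := hBne
      intro hv0
      have hfb : u < f b := hub b (subset_convexHull ℝ (closure B) (subset_closure hb))
      have : (0 : ℝ) = f b := by rw [← hfv b, hv0, inner_zero_left]
      linarith
    · intro x hx
      have hfx : u < f x := hub x (subset_convexHull ℝ (closure B) (subset_closure hx))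
      rw [hfv x]
      linarith
  -- step 2 : Carathéodory
  obtain ⟨ι, hι, z, lam, hzC, hai, hlam0, hlam1, hzsum⟩ :=
    eq_pos_convex_span_of_mem_convexHull h0C
  have hznorm : ∀ i, ‖z i‖ = 1 := fun i => hCnorm _ (hzC ⟨i, rfl⟩)
  have hzself : ∀ i, ⟪z i, z i⟫ = 1 := fun i => by
    rw [real_inner_self_eq_norm_sq, hznorm]; norm_num
  set d := Metric.diam B with hd
  clear_value d
  have hd0 : 0 ≤ d := by rw [hd]; exact Metric.diam_nonneg
  have hiner : ∀ i j, 1 - d ^ 2 / 2 ≤ ⟪z i, z j⟫ := by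
    intro i j
    have hdist : dist (z i) (z j) ≤ d := by
      rw [← hdiamC]
      exact Metric.dist_le_diam_of_mem hCbd (hzC ⟨i, rfl⟩) (hzC ⟨j, rfl⟩)
    have h2 : ‖z i - z j‖ ^ 2 ≤ d ^ 2 := by
      rw [← dist_eq_norm]
      exact pow_le_pow_left₀ dist_nonneg hdist 2
    rw [norm_sub_sq_real, hznorm, hznorm] at h2
    linarith
  have hkey0 : (0 : ℝ) = ∑ i, ∑ j, lam i * lam j * ⟪z i, z j⟫ := by
    rw [← aux_inner_sum_sum, hzsum, inner_zero_left]
  set S := ∑ i, lam i ^ 2 with hS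
  clear_value S
  have hS0 : 0 ≤ S := by rw [hS]; exact Finset.sum_nonneg fun i _ => sq_nonneg _
  have hdiaglam : ∑ i, lam i * lam i = S := by
    rw [hS]; exact Finset.sum_congr rfl fun i _ => (sq (lam i)).symm
  have hlamsumsq : ∑ i, ∑ j, lam i * lam j = 1 := by
    rw [← Fintype.sum_mul_sum, hlam1, mul_one]
  have hofflam : ∑ i, ∑ j ∈ Finset.univ.erase i, lam i * lam j = 1 - S := by
    have h1 := aux_sum_split (fun i j : ι => lam i * lam j)
    rw [hlamsumsq, hdiaglam] at h1
    linarith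
  have hofftotal : ∑ i, ∑ j ∈ Finset.univ.erase i, lam i * lam j * ⟪z i, z j⟫ = -S := by
    have h1 := aux_sum_split (fun i j : ι => lam i * lam j * ⟪z i, z j⟫)
    rw [← hkey0] at h1
    have h2 : ∑ i, lam i * lam i * ⟪z i, z i⟫ = S := by
      rw [← hdiaglam]
      exact Finset.sum_congr rfl fun i _ => by rw [hzself]; ring
    rw [h2] at h1
    linarith
  have hofflower : (1 - d ^ 2 / 2) * (1 - S) ≤ -S := by
    rw [← hofflam, ← hofftotal, Finset.mul_sum]
    refine Finset.sum_le_sum fun i _ => ?_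
    rw [Finset.mul_sum]
    refine Finset.sum_le_sum fun j _ => ?_
    rw [mul_comm (1 - d ^ 2 / 2) (lam i * lam j)]
    exact mul_le_mul_of_nonneg_left (hiner i j) (mul_nonneg (hlam0 i).le (hlam0 j).le)
  have hkey : 1 ≤ d ^ 2 / 2 * (1 - S) := by
    have h := hofflower
    ring_nf at h ⊢
    linarith
  have hCS2 : 1 ≤ (Fintype.card ι : ℝ) * S := by
    have h1 := sq_sum_le_card_mul_sum_sq (s := (Finset.univ : Finset ι)) (f := lam)
    rw [hlam1] at h1
    simpa [hS] using h1
  have hcard : (Fintype.card ι : ℝ) ≤ (n : ℝ) + 1 := by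
    have h1 := hai.card_le_finrank_succ
    have h2 : Module.finrank ℝ (vectorSpan ℝ (Set.range z)) ≤ n := by
      simpa [finrank_euclideanSpace_fin] using
        Submodule.finrank_le (vectorSpan ℝ (Set.range z))
    have : Fintype.card ι ≤ n + 1 := by omega
    exact_mod_cast this
  have hSlow : 1 ≤ ((n : ℝ) + 1) * S := by
    have := mul_le_mul_of_nonneg_right hcard hS0
    linarith
  have h1mS : 0 < 1 - S := by
    by_contra h
    push_neg at h
    have h2 : d ^ 2 / 2 * (1 - S) ≤ 0 :=
      mul_nonpos_of_nonneg_of_nonpos (by positivity) (by linarith)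
    linarith
  have hd2 : 2 + 2 / (n : ℝ) ≤ d ^ 2 := by
    have h2 : 2 ≤ d ^ 2 * (1 - S) := by
      have h := hkey
      ring_nf at h ⊢
      linarith
    have h3 : ((n : ℝ) + 1) * (1 - S) ≤ n := by
      have h := hSlow
      ring_nf at h ⊢
      linarith
    have h6 : 2 / (1 - S) ≤ d ^ 2 := by rw [div_le_iff₀ h1mS]; linarith
    have h7 : (n : ℝ) + 1 ≤ n / (1 - S) := by rw [le_div_iff₀ h1mS]; linarith
    have h4 : 2 * ((n : ℝ) + 1) ≤ d ^ 2 * n :=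
      calc 2 * ((n : ℝ) + 1) ≤ 2 * ((n : ℝ) / (1 - S)) := by linarith
        _ = (2 / (1 - S)) * n := by ring
        _ ≤ d ^ 2 * n := mul_le_mul_of_nonneg_right h6 (le_of_lt hnpos)
    have h5 : 2 + 2 / (n : ℝ) = 2 * ((n : ℝ) + 1) / n := by field_simp
    rw [h5, div_le_iff₀ hnpos]
    linarith [h4]
  have hmain : Real.sqrt (2 + 2 / (n : ℝ)) ≤ d := by
    have h1 := Real.sqrt_le_sqrt hd2
    rwa [Real.sqrt_sq hd0] at h1
  refine ⟨hmain, fun hdeq => ?_⟩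
  -- equality case
  have hd2eq : d ^ 2 = 2 + 2 / (n : ℝ) := by
    rw [hdeq, Real.sq_sqrt]
    positivity
  have hSle : ((n : ℝ) + 1) * S ≤ 1 := by
    have hkk : 1 ≤ ((n : ℝ) + 1) / n * (1 - S) := by
      have h2 : d ^ 2 / 2 = ((n : ℝ) + 1) / n := by rw [hd2eq]; field_simp
      rw [← h2]
      exact hkey
    have h4 := mul_le_mul_of_nonneg_right hkk (le_of_lt hnpos)
    have h5 : ((n : ℝ) + 1) / n * (1 - S) * n = ((n : ℝ) + 1) * (1 - S) := by
      field_simp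
    rw [h5, one_mul] at h4
    have h := h4
    ring_nf at h ⊢
    linarith
  have hSeq : S = 1 / ((n : ℝ) + 1) := by
    rw [eq_div_iff hn1]
    linarith [hSlow, hSle]
  have hcardeq : Fintype.card ι = n + 1 := by
    have h1 : ((n : ℝ) + 1) ≤ (Fintype.card ι : ℝ) := by
      rw [hSeq] at hCS2
      have h2 := mul_le_mul_of_nonneg_right hCS2 (le_of_lt (by positivity : (0:ℝ) < (n:ℝ) + 1))
      rw [one_mul, mul_assoc] at h2
      rw [one_div, inv_mul_cancel₀ hn1, mul_one] at h2
      exact h2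
    have hle : Fintype.card ι ≤ n + 1 := by exact_mod_cast hcard
    have hge : n + 1 ≤ Fintype.card ι := by exact_mod_cast h1
    omega
  -- every pair of distinct Carathéodory points has inner product -1/n
  have hzij : ∀ i j, i ≠ j → ⟪z i, z j⟫ = -1 / (n : ℝ) := by
    have hr : 1 - d ^ 2 / 2 = -1 / (n : ℝ) := by rw [hd2eq]; field_simp; ring
    have hsum0 : ∑ i, ∑ j ∈ Finset.univ.erase i,
        (lam i * lam j * ⟪z i, z j⟫ - (1 - d ^ 2 / 2) * (lam i * lam j)) = 0 := by
      rw [Finset.sum_congr rfl fun i _ => Finset.sum_sub_distrib _ _]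
      rw [Finset.sum_sub_distrib, hofftotal]
      have : ∑ i, ∑ j ∈ Finset.univ.erase i, (1 - d ^ 2 / 2) * (lam i * lam j)
          = (1 - d ^ 2 / 2) * (1 - S) := by
        rw [← hofflam, Finset.mul_sum]
        exact Finset.sum_congr rfl fun i _ => by rw [Finset.mul_sum]
      rw [this, hr, hSeq]
      field_simp
      ring
    have hnn : ∀ i ∈ (Finset.univ : Finset ι), 0 ≤ ∑ j ∈ Finset.univ.erase i,
        (lam i * lam j * ⟪z i, z j⟫ - (1 - d ^ 2 / 2) * (lam i * lam j)) := by
      intro i _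
      refine Finset.sum_nonneg fun j _ => ?_
      rw [sub_nonneg, mul_comm (1 - d ^ 2 / 2) (lam i * lam j)]
      exact mul_le_mul_of_nonneg_left (hiner i j) (mul_nonneg (hlam0 i).le (hlam0 j).le)
    have houter := (Finset.sum_eq_zero_iff_of_nonneg hnn).mp hsum0
    intro i j hij
    have hinner := (Finset.sum_eq_zero_iff_of_nonneg (fun j hj => by
      rw [sub_nonneg, mul_comm (1 - d ^ 2 / 2) (lam i * lam j)]
      exact mul_le_mul_of_nonneg_left (hiner i j) (mul_nonneg (hlam0 i).le (hlam0 j).le))).mp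
      (houter i (Finset.mem_univ i))
    have hterm := hinner j (Finset.mem_erase.mpr ⟨hij.symm, Finset.mem_univ j⟩)
    have hlampos : 0 < lam i * lam j := mul_pos (hlam0 i) (hlam0 j)
    have : lam i * lam j * ⟪z i, z j⟫ = lam i * lam j * (1 - d ^ 2 / 2) := by
      rw [mul_comm (lam i * lam j) (1 - d ^ 2 / 2)] ; linarith [hterm]
    have h2 := mul_left_cancel₀ (ne_of_gt hlampos) this
    rw [h2, hr]
  -- build the simplex
  set e : Fin (n + 1) ≃ ι := (Fintype.equivFinOfCardEq hcardeq).symm with he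
  set w : Fin (n + 1) → EuclideanSpace ℝ (Fin n) := fun k => z (e k) with hw
  have hwnorm : ∀ k, ‖w k‖ = 1 := fun k => hznorm (e k)
  have hwinner : ∀ i j, i ≠ j → ⟪w i, w j⟫ = -1 / (n : ℝ) := fun i j hij =>
    hzij (e i) (e j) fun hc => hij (e.injective hc)
  have hwC : Set.range w ⊆ closure B := by
    rintro _ ⟨k, rfl⟩
    exact hzC ⟨e k, rfl⟩
  refine ⟨w, hwnorm, hwinner, hwC, ?_⟩
  intro hclosed
  have hCB : closure B = B := hclosed.closure_eq
  apply Set.Subset.antisymm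
  · intro x hx
    have hxnorm : ‖x‖ = 1 := by
      have := hB hx
      rwa [Metric.mem_sphere, dist_zero_right] at this
    have hwx : ∀ k, (-1 / (n : ℝ)) ≤ ⟪x, w k⟫ := by
      intro k
      have hwB : w k ∈ B := by rw [← hCB]; exact hwC ⟨k, rfl⟩
      have hdist : dist x (w k) ≤ d := by
        rw [hd]; exact Metric.dist_le_diam_of_mem hBbd hx hwB
      have h2 : ‖x - w k‖ ^ 2 ≤ d ^ 2 := by
        rw [← dist_eq_norm]
        exact pow_le_pow_left₀ dist_nonneg hdist 2
      rw [norm_sub_sq_real, hxnorm, hwnorm k, hd2eq] at h2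
      have h3 : -(1 / (n : ℝ)) ≤ ⟪x, w k⟫ := by
        linarith [show (2 : ℝ) / (n : ℝ) = 2 * (1 / n) from by ring]
      linarith [show (-1 / (n : ℝ)) = -(1 / n) from by ring]
    obtain ⟨j, hj⟩ := aux_rigid hn w hwnorm hwinner x hxnorm hwx
    exact ⟨j, hj.symm⟩
  · rintro _ ⟨k, rfl⟩
    rw [← hCB]
    exact hwC ⟨k, rfl⟩
end

section
/- Let $C\subset S^{n-1}$ be a finite set not contained in any open hemisphere, and suppose $C$ is contained in the closed hemisphere $\{x:\langle v,x\rangle\ge 0\}$ for some $v\ne 0$. Then the set $C\cap\{x:\langle v,x\rangle=0\}$ (the intersection of $C$ with the bounding great subsphere) is itself not contained in any open hemisphere of that great subsphere $S^{n-2}$. -/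
open Metric Set

/-- If a finite set `C ⊆ Sⁿ⁻¹` is contained in no open hemisphere but lies in the
closed hemisphere `{x | ⟪v,x⟫ ≥ 0}`, then `C` intersected with the bounding great
subsphere `{x | ⟪v,x⟫ = 0}` is contained in no open hemisphere of that subsphere. -/
theorem boundary_trace_not_in_open_hemisphere (n : ℕ)
    (C : Set (EuclideanSpace ℝ (Fin n))) (hCfin : C.Finite)
    (hC : C ⊆ Metric.sphere (0 : EuclideanSpace ℝ (Fin n)) 1)
    (hhemi : ¬ ∃ u : EuclideanSpace ℝ (Fin n), u ≠ 0 ∧ ∀ x ∈ C, 0 < (inner ℝ u x : ℝ))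
    (v : EuclideanSpace ℝ (Fin n)) (hv : v ≠ 0)
    (hCv : ∀ x ∈ C, 0 ≤ (inner ℝ v x : ℝ)) :
    ¬ ∃ w : EuclideanSpace ℝ (Fin n), w ≠ 0 ∧ (inner ℝ v w : ℝ) = 0 ∧
        ∀ x ∈ C, (inner ℝ v x : ℝ) = 0 → 0 < (inner ℝ w x : ℝ) := by
  rintro ⟨w, hw0, hvw, hw⟩
  obtain ⟨M, hM⟩ := (hCfin.image (fun x => -(inner ℝ w x : ℝ) / (inner ℝ v x : ℝ))).bddAbove
  set t : ℝ := max M 0 + 1 with ht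
  have ht0 : 0 < t := by positivity
  refine hhemi ⟨w + t • v, ?_, ?_⟩
  · intro h
    have h1 : (inner ℝ v (w + t • v) : ℝ) = t * ‖v‖ ^ 2 := by
      rw [inner_add_right, real_inner_smul_right, real_inner_comm] at *
      rw [hvw, real_inner_self_eq_norm_sq]
      ring
    rw [h, inner_zero_right] at h1
    have : t * ‖v‖ ^ 2 > 0 := by
      have := norm_pos_iff.mpr hv
      positivity
    linarith
  · intro x hx
    have hexp : (inner ℝ (w + t • v) x : ℝ) = inner ℝ w x + t * inner ℝ v x := by
      rw [inner_add_left, real_inner_smul_left]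
    rcases eq_or_lt_of_le (hCv x hx) with h0 | h0
    · rw [hexp, ← h0]
      simpa using hw x hx h0.symm
    · have hMle : -(inner ℝ w x : ℝ) / (inner ℝ v x : ℝ) ≤ M := hM ⟨x, hx, rfl⟩
      have : -(inner ℝ w x : ℝ) / (inner ℝ v x : ℝ) < t := by
        have : M < t := by simp [ht]; linarith [le_max_left M 0]
        linarith
      rw [div_lt_iff₀ h0] at this
      rw [hexp]; linarith
end

section
/- If a subset $B$ of the unit circle $S^1$ is not contained in any open semicircle, then $\mathrm{diam}(B)\ge\sqrt{3}$, with equality exactly when the closure of $B$ is the vertex set of an inscribed equilateral triangle. -/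
open Metric Set
open scoped RealInnerProductSpace

section Aux

private theorem key_id' (a b c P Q : ℝ) (h1 : a^2 + P^2 = 1) (h2 : b^2 + Q^2 = 1)
    (h3 : a*b + P*Q = c) : a^2 + b^2 - 2*a*b*c = 1 - c^2 := by
  linear_combination Q^2 * h1 + (1-a^2) * h2 - (c - a*b + P*Q) * h3

private theorem scalar1' (a b c P Q : ℝ) (h1 : a^2 + P^2 = 1) (h2 : b^2 + Q^2 = 1)
    (h3 : a*b + P*Q = c)
    (hc : -(1/2) < c) (ha : c ≤ a) (hb : c ≤ b) (hs : a + b ≤ 0) : False := by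
  have key := key_id' a b c P Q h1 h2 h3
  have ha' : a ≤ -c := by linarith
  have hb' : b ≤ -c := by linarith
  have hc0 : c ≤ 0 := by linarith
  have ha2 : a^2 ≤ (-c)^2 := sq_le_sq' (by linarith) ha'
  have hb2 : b^2 ≤ (-c)^2 := sq_le_sq' (by linarith) hb'
  have hab : a*b ≤ c^2 := by nlinarith [sq_nonneg (a-b)]
  have habc : c^3 ≤ a*b*c := by nlinarith [mul_le_mul_of_nonpos_right hab hc0]
  have hfin : 1 ≤ 3*c^2 - 2*c^3 := by nlinarith
  have hpos : 0 < (2*c+1) * (c-1)^2 := mul_pos (by linarith) (by nlinarith [sq_nonneg c])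
  nlinarith [hpos]

private theorem scalar2' (a b P Q : ℝ) (h1 : a^2 + P^2 = 1) (h2 : b^2 + Q^2 = 1)
    (h3 : a*b + P*Q = -(1/2)) (ha : -(1/2) ≤ a) (hb : -(1/2) ≤ b) (hs : a + b ≤ 1/2) :
    a + b = -1 ∨ (a = 1 ∧ b = -(1/2)) ∨ (a = -(1/2) ∧ b = 1) := by
  have id3 : a^2 + a*b + b^2 = 3/4 := by
    linear_combination key_id' a b (-(1/2)) P Q h1 h2 h3
  have hm : 0 ≤ (a+1/2)*(b+1/2) := mul_nonneg (by linarith) (by linarith)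
  have hfact : (a+b+1)*(a+b-1/2) = (a+1/2)*(b+1/2) := by linear_combination id3
  rcases eq_or_lt_of_le hs with heq | hlt
  · have hq : (a-1)*(a+1/2) = 0 := by linear_combination id3 + (-b - 1/2)*heq
    rcases mul_eq_zero.1 hq with h | h
    · right; left; constructor <;> linarith
    · right; right; constructor <;> linarith
  · left
    have h4 : a + b + 1 ≤ 0 := by nlinarith
    linarith

private theorem inner_coords' (x y : EuclideanSpace ℝ (Fin 2)) :
    ⟪x,y⟫ = x 0 * y 0 + x 1 * y 1 := by
  simp [PiLp.inner_apply, Fin.sum_univ_two]; ring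

private theorem norm_coords' (x : EuclideanSpace ℝ (Fin 2)) (h : ‖x‖ = 1) :
    x 0^2 + x 1^2 = 1 := by
  have := real_inner_self_eq_norm_sq x
  rw [h, inner_coords'] at this
  nlinarith

private theorem unit_sq' (x z : EuclideanSpace ℝ (Fin 2)) (hx : ‖x‖ = 1) (hz : ‖z‖ = 1) :
    ⟪x,z⟫^2 + (x 0 * z 1 - x 1 * z 0)^2 = 1 := by
  have h1 := norm_coords' x hx
  have h2 := norm_coords' z hz
  rw [inner_coords']
  linear_combination (z 0^2 + z 1^2) * h1 + h2

private theorem binet' (x y z : EuclideanSpace ℝ (Fin 2)) (hz : ‖z‖ = 1) :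
    ⟪x,z⟫ * ⟪y,z⟫ + (x 0 * z 1 - x 1 * z 0) * (y 0 * z 1 - y 1 * z 0) = ⟪x,y⟫ := by
  have h2 := norm_coords' z hz
  rw [inner_coords', inner_coords', inner_coords']
  linear_combination (x 0 * y 0 + x 1 * y 1) * h2

private theorem dist_sq' (x y : EuclideanSpace ℝ (Fin 2)) (hx : ‖x‖ = 1) (hy : ‖y‖ = 1) :
    dist x y ^ 2 = 2 - 2 * ⟪x,y⟫ := by
  rw [dist_eq_norm, norm_sub_sq_real, hx, hy]; ring

private theorem classify' (x y z : EuclideanSpace ℝ (Fin 2))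
    (hx : ‖x‖ = 1) (hy : ‖y‖ = 1) (hz : ‖z‖ = 1)
    (hxy : ⟪x,y⟫ = -(1/2)) (ha : -(1/2) ≤ ⟪x,z⟫) (hb : -(1/2) ≤ ⟪y,z⟫)
    (hs : ⟪x,z⟫ + ⟪y,z⟫ ≤ 1/2) : z = -(x+y) ∨ z = x ∨ z = y := by
  have h3 : ⟪x,z⟫*⟪y,z⟫ + (x 0 * z 1 - x 1 * z 0) * (y 0 * z 1 - y 1 * z 0) = -(1/2) := by
    rw [binet' x y z hz]; exact hxy
  rcases scalar2' _ _ _ _ (unit_sq' x z hx hz) (unit_sq' y z hy hz) h3 ha hb hs with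
    hsum | ⟨ha1, hb1⟩ | ⟨ha1, hb1⟩
  · left
    have hzero : ⟪z+(x+y), z+(x+y)⟫ = 0 := by
      have e1 := real_inner_self_eq_norm_sq x
      have e2 := real_inner_self_eq_norm_sq y
      have e3 := real_inner_self_eq_norm_sq z
      rw [hx] at e1; rw [hy] at e2; rw [hz] at e3
      simp only [inner_add_left, inner_add_right]
      have c1 : ⟪z,x⟫ = ⟪x,z⟫ := real_inner_comm x z
      have c2 : ⟪z,y⟫ = ⟪y,z⟫ := real_inner_comm y z
      have c3 : ⟪y,x⟫ = ⟪x,y⟫ := real_inner_comm x y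
      rw [c1, c2, c3, e1, e2, e3, hxy]
      linarith
    have h0 : z + (x+y) = 0 := inner_self_eq_zero.1 hzero
    exact eq_neg_of_add_eq_zero_left h0
  · right; left
    have hzero : ⟪z - x, z - x⟫ = 0 := by
      simp only [inner_sub_left, inner_sub_right]
      have e1 := real_inner_self_eq_norm_sq x
      have e3 := real_inner_self_eq_norm_sq z
      rw [hx] at e1; rw [hz] at e3
      have c1 : ⟪z,x⟫ = ⟪x,z⟫ := real_inner_comm x z
      rw [c1, e1, e3, ha1]; norm_num
    have h0 : z - x = 0 := inner_self_eq_zero.1 hzero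
    exact sub_eq_zero.1 h0
  · right; right
    have hzero : ⟪z - y, z - y⟫ = 0 := by
      simp only [inner_sub_left, inner_sub_right]
      have e2 := real_inner_self_eq_norm_sq y
      have e3 := real_inner_self_eq_norm_sq z
      rw [hy] at e2; rw [hz] at e3
      have c2 : ⟪z,y⟫ = ⟪y,z⟫ := real_inner_comm y z
      rw [c2, e2, e3, hb1]; norm_num
    have h0 : z - y = 0 := inner_self_eq_zero.1 hzero
    exact sub_eq_zero.1 h0

end Aux

set_option maxHeartbeats 1000000 in
/-- A subset of the unit circle contained in no open semicircle has diameter at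
least `√3`, with equality exactly when its closure is the vertex set of an
inscribed equilateral triangle. -/
theorem circle_no_semicircle_diam (B : Set (EuclideanSpace ℝ (Fin 2)))
    (hB : B ⊆ Metric.sphere (0 : EuclideanSpace ℝ (Fin 2)) 1)
    (hsemi : ¬ ∃ v : EuclideanSpace ℝ (Fin 2), v ≠ 0 ∧ ∀ x ∈ B, 0 < (inner ℝ v x : ℝ)) :
    Real.sqrt 3 ≤ Metric.diam B ∧
      (Metric.diam B = Real.sqrt 3 ↔
        ∃ a b c : EuclideanSpace ℝ (Fin 2),
          ‖a‖ = 1 ∧ ‖b‖ = 1 ∧ ‖c‖ = 1 ∧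
          dist a b = Real.sqrt 3 ∧ dist a c = Real.sqrt 3 ∧ dist b c = Real.sqrt 3 ∧
          closure B = {a, b, c}) := by
  push_neg at hsemi
  have hne : B.Nonempty := by
    by_contra h
    rw [Set.not_nonempty_iff_eq_empty] at h
    obtain ⟨z, hz, -⟩ := hsemi (EuclideanSpace.single 0 1) (by
      intro h0
      have h1 : (EuclideanSpace.single (0 : Fin 2) (1:ℝ)) 0 = 0 := by rw [h0]; rfl
      rw [EuclideanSpace.single_apply] at h1
      simp at h1)
    rw [h] at hz; exact absurd hz (Set.notMem_empty z)
  have hBb : Bornology.IsBounded B := Metric.isBounded_sphere.subset hB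
  have hCc : IsCompact (closure B) := hBb.isCompact_closure
  have hCb : Bornology.IsBounded (closure B) := hCc.isBounded
  have hCs : closure B ⊆ Metric.sphere 0 1 := closure_minimal hB Metric.isClosed_sphere
  have hu : ∀ p ∈ closure B, ‖p‖ = 1 := by
    intro p hp
    have := hCs hp
    rwa [mem_sphere_zero_iff_norm] at this
  have hCne : (closure B).Nonempty := hne.closure
  obtain ⟨⟨x, y⟩, ⟨hxC, hyC⟩, hm⟩ := (hCc.prod hCc).exists_isMaxOn (hCne.prod hCne)
    continuous_dist.continuousOn
  rw [isMaxOn_iff] at hm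
  have hmax : ∀ p ∈ closure B, ∀ q ∈ closure B, dist p q ≤ dist x y :=
    fun p hp q hq => hm (p, q) (Set.mk_mem_prod hp hq)
  have nx : ‖x‖ = 1 := hu x hxC
  have ny : ‖y‖ = 1 := hu y hyC
  have hdiam : Metric.diam B = dist x y := by
    rw [← Metric.diam_closure]
    exact le_antisymm (Metric.diam_le_of_forall_dist_le dist_nonneg hmax)
      (Metric.dist_le_diam_of_mem hCb hxC hyC)
  have hinner : ∀ p ∈ closure B, ∀ q ∈ closure B, ⟪x,y⟫ ≤ ⟪p,q⟫ := by
    intro p hp q hq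
    have h1 := dist_sq' p q (hu p hp) (hu q hq)
    have h2 := dist_sq' x y nx ny
    have h3 : dist p q ^ 2 ≤ dist x y ^ 2 :=
      pow_le_pow_left₀ dist_nonneg (hmax p hp q hq) 2
    linarith
  have part1 : Real.sqrt 3 ≤ Metric.diam B := by
    by_contra hlt
    push_neg at hlt
    have hdlt : dist x y < Real.sqrt 3 := by rw [← hdiam]; exact hlt
    have hsq : dist x y ^ 2 < 3 := by
      have h1 : dist x y ^ 2 < Real.sqrt 3 ^ 2 :=
        pow_lt_pow_left₀ hdlt dist_nonneg two_ne_zero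
      rwa [Real.sq_sqrt (by norm_num : (0:ℝ) ≤ 3)] at h1
    have hc : -(1/2) < ⟪x,y⟫ := by
      have := dist_sq' x y nx ny; linarith
    have hv : x + y ≠ 0 := by
      intro h0
      have : ⟪x,y⟫ = -1 := by
        rw [eq_neg_of_add_eq_zero_left h0, inner_neg_left, real_inner_self_eq_norm_sq, ny]
        norm_num
      linarith
    obtain ⟨z, hzB, hz0⟩ := hsemi (x+y) hv
    have hzC : z ∈ closure B := subset_closure hzB
    have hz1 : ‖z‖ = 1 := hu z hzC
    have hab : ⟪x,z⟫ + ⟪y,z⟫ ≤ 0 := by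
      rw [← inner_add_left]; exact hz0
    exact scalar1' ⟪x,z⟫ ⟪y,z⟫ ⟪x,y⟫ _ _ (unit_sq' x z nx hz1) (unit_sq' y z ny hz1)
      (binet' x y z hz1) hc (hinner x hxC z hzC) (hinner y hyC z hzC) hab
  refine ⟨part1, ⟨fun hEq => ?_, fun hEx => ?_⟩⟩
  · -- equality implies equilateral triangle
    have hdxy : dist x y = Real.sqrt 3 := by rw [← hdiam]; exact hEq
    have hd3 : dist x y ^ 2 = 3 := by
      rw [hdxy, Real.sq_sqrt]; norm_num
    have hcxy : ⟪x,y⟫ = -(1/2) := by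
      have := dist_sq' x y nx ny; linarith
    have hvnz : x + y ≠ 0 := by
      intro h0
      have : ⟪x,y⟫ = -1 := by
        rw [eq_neg_of_add_eq_zero_left h0, inner_neg_left, real_inner_self_eq_norm_sq, ny]
        norm_num
      rw [hcxy] at this; norm_num at this
    set w : EuclideanSpace ℝ (Fin 2) := -(x+y) with hw
    have nw : ‖w‖ = 1 := by
      have h1 : ‖x+y‖^2 = 1 := by
        rw [norm_add_sq_real, nx, ny, hcxy]; norm_num
      have h2 : ‖w‖ = ‖x+y‖ := by rw [hw, norm_neg]
      nlinarith [norm_nonneg (x+y)]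
    have hwx : ⟪x,w⟫ = -(1/2) := by
      rw [hw, inner_neg_right, inner_add_right, real_inner_self_eq_norm_sq, nx, hcxy]
      norm_num
    have hyx : ⟪y,x⟫ = -(1/2) := by rw [real_inner_comm]; exact hcxy
    have hwy : ⟪y,w⟫ = -(1/2) := by
      rw [hw, inner_neg_right, inner_add_right, hyx, real_inner_self_eq_norm_sq, ny]
      norm_num
    have hclass : ∀ z ∈ closure B, ⟪x,z⟫ + ⟪y,z⟫ ≤ 1/2 → z = w ∨ z = x ∨ z = y := by
      intro z hz hzs
      have h1 := hinner x hxC z hz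
      have h2 := hinner y hyC z hz
      exact classify' x y z nx ny (hu z hz) hcxy (by linarith) (by linarith) hzs
    have hwC : w ∈ closure B := by
      by_contra hwC
      obtain ⟨z, hzB, hz0⟩ := hsemi (x+y) hvnz
      have hzC := subset_closure hzB
      have hs0 : ⟪x,z⟫ + ⟪y,z⟫ ≤ 0 := by
        rw [← inner_add_left]; exact hz0
      rcases hclass z hzC (by linarith) with h | h | h
      · rw [h] at hzC; exact hwC hzC
      · rw [h] at hs0
        have e1 : ⟪x,x⟫ = (1:ℝ) := by rw [real_inner_self_eq_norm_sq, nx]; norm_num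
        rw [e1, hyx] at hs0; norm_num at hs0
      · rw [h] at hs0
        have e1 : ⟪y,y⟫ = (1:ℝ) := by rw [real_inner_self_eq_norm_sq, ny]; norm_num
        rw [e1, hcxy] at hs0; norm_num at hs0
    have hCeq : closure B = {x, y, w} := by
      apply subset_antisymm
      · intro z hz
        have hwz : ⟪x,z⟫ + ⟪y,z⟫ ≤ 1/2 := by
          have h1 := hinner w hwC z hz
          have h2 : ⟪w,z⟫ = -(⟪x,z⟫ + ⟪y,z⟫) := by
            rw [hw, inner_neg_left, inner_add_left]
          rw [hcxy] at h1
          linarith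
        rcases hclass z hz hwz with h | h | h
        · right; right; rw [h]; rfl
        · left; exact h
        · right; left; exact h
      · intro z hz
        rcases hz with rfl | rfl | rfl
        · exact hxC
        · exact hyC
        · exact hwC
    have dxw : dist x w = Real.sqrt 3 := by
      have h1 := dist_sq' x w nx nw
      rw [hwx] at h1
      rw [← Real.sqrt_sq dist_nonneg, show dist x w ^2 = 3 by linarith]
    have dyw : dist y w = Real.sqrt 3 := by
      have h1 := dist_sq' y w ny nw
      rw [hwy] at h1
      rw [← Real.sqrt_sq dist_nonneg, show dist y w ^2 = 3 by linarith]
    exact ⟨x, y, w, nx, ny, nw, hdxy, dxw, dyw, hCeq⟩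
  · -- converse
    obtain ⟨a, b, c, ha, hb, hc, hab, hac, hbc, hcl⟩ := hEx
    rw [← Metric.diam_closure, hcl]
    apply le_antisymm
    · apply Metric.diam_le_of_forall_dist_le (Real.sqrt_nonneg 3)
      intro p hp q hq
      rcases hp with rfl | rfl | rfl <;> rcases hq with rfl | rfl | rfl
      · simp [Real.sqrt_nonneg]
      · exact le_of_eq hab
      · exact le_of_eq hac
      · rw [dist_comm]; exact le_of_eq hab
      · simp [Real.sqrt_nonneg]
      · exact le_of_eq hbc
      · rw [dist_comm]; exact le_of_eq hac
      · rw [dist_comm]; exact le_of_eq hbc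
      · simp [Real.sqrt_nonneg]
    · have hfin : ({a, b, c} : Set (EuclideanSpace ℝ (Fin 2))).Finite :=
        ((Set.finite_singleton c).insert b).insert a
      rw [← hab]
      exact Metric.dist_le_diam_of_mem hfin.isBounded (by simp) (by simp)
end
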